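/- Let Σ̂ be a symmetric positive definite p×p real matrix with symmetric positive definite square root Σ̂^{1/2}, let Û ∈ ℝ^{p×K}, define the loss L(V) := (1/2)‖Σ̂^{-1/2} Û − Σ̂^{1/2} V‖_F², and let λ > 0. Let V* ∈ ℝ^{p×K} have support S = { (i,j) : V*_{ij} ≠ 0 } of size s ≥ 1, and assume ‖∇L(V*)‖_{∞,∞} = ‖ Σ̂ V* − Û ‖_{∞,∞} ≤ λ/2. Assume the restricted eigenvalue condition: there exists κ* > 0 such that tr(VᵀΣ̂V) ≥ κ* ‖V‖_{1,2}² for every V ∈ ℝ^{p×K} for which there exists an index set E ⊇ S with |E| ≤ 2s and ‖V_{Eᶜ}‖_{1,1} ≤ 3 ‖V_E‖_{1,1}. If V̂ is a global minimizer of V ↦ L(V) + λ ‖V‖_{1,1}, then ‖V̂ − V*‖_{1,2} ≤ 3 λ √s / (2 κ*). -/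

import Mathlib

open Matrix

/-- The Frobenius norm of a real matrix. -/
noncomputable def frobNorm {p K : ℕ} (A : Matrix (Fin p) (Fin K) ℝ) : ℝ :=
  Real.sqrt (∑ i, ∑ j, (A i j) ^ 2)

/-- The elementwise ℓ₁ norm `‖A‖_{1,1} = ∑_{i,j} |A_{ij}|` of a real matrix. -/
def norm11 {p K : ℕ} (A : Matrix (Fin p) (Fin K) ℝ) : ℝ :=
  ∑ i, ∑ j, |A i j|

/-- The `(1,2)` norm `‖A‖_{1,2} = ∑_j ( ∑_i A_{ij}² )^{1/2}`: the sum of the Euclidean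
norms of the columns of `A`. -/
noncomputable def norm12 {p K : ℕ} (A : Matrix (Fin p) (Fin K) ℝ) : ℝ :=
  ∑ j, Real.sqrt (∑ i, (A i j) ^ 2)

/-- `restrictF A E` agrees with `A` on the entries indexed by the finite set `E` and is
zero elsewhere. -/
def restrictF {p K : ℕ} (A : Matrix (Fin p) (Fin K) ℝ)
    (E : Finset (Fin p × Fin K)) : Matrix (Fin p) (Fin K) ℝ :=
  fun i j => if (i, j) ∈ E then A i j else 0

/-! ### Auxiliary lemmas -/

lemma le_of_small_t {c b q : ℝ} (hq : 0 ≤ q)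
    (h : ∀ t : ℝ, 0 < t → t ≤ 1 → c ≤ b + t * q) : c ≤ b := by
  by_contra hcb
  push_neg at hcb
  have hcb' : 0 < c - b := by linarith
  set t : ℝ := min 1 ((c - b) / (2 * (q + 1))) with ht
  have hq1 : 0 < q + 1 := by linarith
  have ht0 : 0 < t := lt_min one_pos (by positivity)
  have ht1 : t ≤ 1 := min_le_left _ _
  have h2 : t ≤ (c - b) / (2 * (q + 1)) := min_le_right _ _
  have := h t ht0 ht1
  have htq : t * q ≤ (c - b) / (2 * (q + 1)) * q :=
    mul_le_mul_of_nonneg_right h2 hq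
  have : (c - b) / (2 * (q + 1)) * q < c - b := by
    rw [div_mul_eq_mul_div, div_lt_iff₀ (by positivity)]
    nlinarith
  linarith

/-- The entrywise inner product of two matrices. -/
def ip {p K : ℕ} (A B : Matrix (Fin p) (Fin K) ℝ) : ℝ := ∑ i, ∑ j, A i j * B i j

lemma trace_eq_ip {p K : ℕ} (A B : Matrix (Fin p) (Fin K) ℝ) :
    Matrix.trace (Aᵀ * B) = ip A B := by
  simp only [Matrix.trace, Matrix.diag, Matrix.mul_apply, Matrix.transpose_apply, ip]
  exact Finset.sum_comm

lemma ip_comm {p K : ℕ} (A B : Matrix (Fin p) (Fin K) ℝ) : ip A B = ip B A := by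
  unfold ip; congr 1; ext i; congr 1; ext j; ring

lemma ip_sub_left {p K : ℕ} (A B C : Matrix (Fin p) (Fin K) ℝ) :
    ip (A - B) C = ip A C - ip B C := by
  simp [ip, Matrix.sub_apply, sub_mul, Finset.sum_sub_distrib]

lemma ip_neg_left {p K : ℕ} (A B : Matrix (Fin p) (Fin K) ℝ) :
    ip (-A) B = - ip A B := by
  simp [ip, Matrix.neg_apply, Finset.sum_neg_distrib]

lemma ip_neg_right {p K : ℕ} (A B : Matrix (Fin p) (Fin K) ℝ) :
    ip A (-B) = - ip A B := by
  simp [ip, Matrix.neg_apply, Finset.sum_neg_distrib]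

lemma ip_quad_nonneg {p : ℕ} {Sh : Matrix (Fin p) (Fin p) ℝ} (hSh : Sh.PosDef)
    {K : ℕ} (B : Matrix (Fin p) (Fin K) ℝ) : 0 ≤ ip B (Sh * B) := by
  unfold ip
  rw [Finset.sum_comm]
  refine Finset.sum_nonneg fun j _ => ?_
  have := hSh.posSemidef.dotProduct_mulVec_nonneg (fun i => B i j)
  simpa [dotProduct, Matrix.mulVec, Matrix.mul_apply] using this

lemma trace_quad_eq {p K : ℕ} (Sh : Matrix (Fin p) (Fin p) ℝ)
    (V : Matrix (Fin p) (Fin K) ℝ) :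
    Matrix.trace (Vᵀ * Sh * V) = ip V (Sh * V) := by
  rw [Matrix.mul_assoc, trace_eq_ip]

lemma frob_sq' {p K : ℕ} (A : Matrix (Fin p) (Fin K) ℝ) :
    (frobNorm A) ^ 2 = ∑ i, ∑ j, (A i j) ^ 2 := by
  rw [frobNorm, Real.sq_sqrt]; positivity

lemma frob_sub_smul {p K : ℕ} (A B : Matrix (Fin p) (Fin K) ℝ) (t : ℝ) :
    (frobNorm (A - t • B)) ^ 2
      = (frobNorm A) ^ 2 - 2 * t * ip A B + t ^ 2 * (frobNorm B) ^ 2 := by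
  rw [frob_sq', frob_sq', frob_sq']
  unfold ip
  rw [show (∑ i, ∑ j, ((A - t • B) i j) ^ 2)
      = ∑ i, ∑ j, ((A i j) ^ 2 - 2 * t * (A i j * B i j) + t ^ 2 * (B i j) ^ 2) from
    Finset.sum_congr rfl fun i _ => Finset.sum_congr rfl fun j _ => by
      simp [Matrix.sub_apply, Matrix.smul_apply, smul_eq_mul]; ring]
  simp only [Finset.sum_add_distrib, Finset.sum_sub_distrib, ← Finset.mul_sum]

lemma norm11_split {p K : ℕ} (A : Matrix (Fin p) (Fin K) ℝ) (E : Finset (Fin p × Fin K)) :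
    norm11 A = norm11 (restrictF A E) + norm11 (restrictF A Eᶜ) := by
  unfold norm11 restrictF
  rw [← Finset.sum_add_distrib]
  refine Finset.sum_congr rfl fun i _ => ?_
  rw [← Finset.sum_add_distrib]
  refine Finset.sum_congr rfl fun j _ => ?_
  by_cases h : (i, j) ∈ E <;> simp [h]

lemma norm11_restrict_eq_sum {p K : ℕ} (A : Matrix (Fin p) (Fin K) ℝ)
    (E : Finset (Fin p × Fin K)) :
    norm11 (restrictF A E) = ∑ q ∈ E, |A q.1 q.2| := by
  unfold norm11 restrictF
  rw [show (∑ i : Fin p, ∑ j : Fin K, |if (i, j) ∈ E then A i j else 0|)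
      = ∑ q : Fin p × Fin K, |if q ∈ E then A q.1 q.2 else 0| from
    (Fintype.sum_prod_type (f := fun q : Fin p × Fin K => |if q ∈ E then A q.1 q.2 else 0|)).symm]
  rw [← Finset.sum_subset (Finset.subset_univ E) (fun q _ hq => by simp [hq])]
  exact Finset.sum_congr rfl fun q hq => by simp [hq]

lemma norm11_nonneg {p K : ℕ} (A : Matrix (Fin p) (Fin K) ℝ) : 0 ≤ norm11 A := by
  unfold norm11; positivity

set_option maxHeartbeats 1000000 in
/-- Main theorem. -/
theorem stmt15
    (p K : ℕ) (Sh R : Matrix (Fin p) (Fin p) ℝ)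
    (hSh : Sh.PosDef) (hR : R.PosDef) (hRR : R * R = Sh)
    (Uh : Matrix (Fin p) (Fin K) ℝ)
    (lam : ℝ) (hlam : 0 < lam)
    (Vstar : Matrix (Fin p) (Fin K) ℝ)
    (S : Finset (Fin p × Fin K)) (hS : ∀ q : Fin p × Fin K, q ∈ S ↔ Vstar q.1 q.2 ≠ 0)
    (s : ℕ) (hs : s = S.card) (hs1 : 1 ≤ s)
    (hgrad : ∀ i j, |(Sh * Vstar - Uh) i j| ≤ lam / 2)
    (κstar : ℝ) (hκpos : 0 < κstar)
    (hRE : ∀ V : Matrix (Fin p) (Fin K) ℝ,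
      (∃ E : Finset (Fin p × Fin K), S ⊆ E ∧ E.card ≤ 2 * s ∧
        norm11 (restrictF V Eᶜ) ≤ 3 * norm11 (restrictF V E)) →
      κstar * (norm12 V) ^ 2 ≤ Matrix.trace (Vᵀ * Sh * V))
    (Vhat : Matrix (Fin p) (Fin K) ℝ)
    (hmin : ∀ V : Matrix (Fin p) (Fin K) ℝ,
      (1 / 2) * (frobNorm (R⁻¹ * Uh - R * Vhat)) ^ 2 + lam * norm11 Vhat
        ≤ (1 / 2) * (frobNorm (R⁻¹ * Uh - R * V)) ^ 2 + lam * norm11 V) :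
    norm12 (Vhat - Vstar) ≤ 3 * lam * Real.sqrt s / (2 * κstar) := by
  classical
  set Δ : Matrix (Fin p) (Fin K) ℝ := Vhat - Vstar with hΔ
  set D : Matrix (Fin p) (Fin K) ℝ := Vstar - Vhat with hD
  set G : Matrix (Fin p) (Fin K) ℝ := Sh * Vstar - Uh with hG
  set A : Matrix (Fin p) (Fin K) ℝ := R⁻¹ * Uh - R * Vhat with hA
  set B : Matrix (Fin p) (Fin K) ℝ := R * D with hB
  have hRsymm : Rᵀ = R := by
    have h1 : Rᴴ = R := hR.isHermitian
    calc Rᵀ = Rᴴ := by ext i j; simp [Matrix.conjTranspose_apply]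
    _ = R := h1
  have hRdet : IsUnit R.det := isUnit_iff_ne_zero.mpr (ne_of_gt hR.det_pos)
  -- Step 1: descent inequality from minimality
  have key : lam * (norm11 Vhat - norm11 Vstar) ≤ - ip A B := by
    apply le_of_small_t (q := (frobNorm B) ^ 2 / 2) (by positivity)
    intro t ht0 ht1
    have hVt : R⁻¹ * Uh - R * (Vhat + t • D) = A - t • B := by
      rw [Matrix.mul_add, Matrix.mul_smul, hA, hB]
      abel
    have hsum := hmin (Vhat + t • D)
    rw [hVt, frob_sub_smul] at hsum
    have hconv : norm11 (Vhat + t • D) ≤ (1 - t) * norm11 Vhat + t * norm11 Vstar := by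
      unfold norm11
      rw [Finset.mul_sum, Finset.mul_sum, ← Finset.sum_add_distrib]
      refine Finset.sum_le_sum fun i _ => ?_
      rw [Finset.mul_sum, Finset.mul_sum, ← Finset.sum_add_distrib]
      refine Finset.sum_le_sum fun j _ => ?_
      have he : (Vhat + t • D) i j = (1 - t) * Vhat i j + t * Vstar i j := by
        simp [hD, Matrix.add_apply, Matrix.smul_apply, Matrix.sub_apply, smul_eq_mul]
        ring
      rw [he]
      calc |(1 - t) * Vhat i j + t * Vstar i j|
          ≤ |(1 - t) * Vhat i j| + |t * Vstar i j| := abs_add_le _ _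
        _ = (1 - t) * |Vhat i j| + t * |Vstar i j| := by
            rw [abs_mul, abs_mul, abs_of_nonneg (by linarith), abs_of_nonneg ht0.le]
    have hconv' : lam * norm11 (Vhat + t • D)
        ≤ lam * ((1 - t) * norm11 Vhat + t * norm11 Vstar) :=
      mul_le_mul_of_nonneg_left hconv hlam.le
    have h2 : t * (lam * (norm11 Vhat - norm11 Vstar))
        ≤ t * (- ip A B + t * ((frobNorm B) ^ 2 / 2)) := by linarith [hsum, hconv']
    exact (mul_le_mul_iff_right₀ ht0).mp h2
  -- Step 2: rewrite the inner product
  have key2 : ip A B = ip (Uh - Sh * Vhat) D := by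
    rw [← trace_eq_ip, ← trace_eq_ip]
    have hAB : Aᵀ * B = (Uh - Sh * Vhat)ᵀ * D := by
      rw [hB, ← Matrix.mul_assoc]
      congr 1
      have h1 : Aᵀ * R = (Rᵀ * A)ᵀ := by
        rw [Matrix.transpose_mul, Matrix.transpose_transpose]
      rw [h1, hRsymm]
      rw [hA, Matrix.mul_sub, ← Matrix.mul_assoc, Matrix.mul_nonsing_inv _ hRdet,
        Matrix.one_mul, ← Matrix.mul_assoc, hRR]
    rw [hAB]
  have hDneg : D = -Δ := by rw [hD, hΔ, neg_sub]
  have hdecomp : Uh - Sh * Vhat = (-G) - Sh * Δ := by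
    rw [hG, hΔ, Matrix.mul_sub, neg_sub]
    abel
  have key3 : - ip A B = - ip G Δ - ip Δ (Sh * Δ) := by
    rw [key2, hDneg, ip_neg_right, hdecomp, ip_sub_left, ip_neg_left,
      ip_comm (Sh * Δ) Δ]
    ring
  set T : ℝ := ip Δ (Sh * Δ) with hT
  have keyT : T ≤ - ip G Δ + lam * (norm11 Vstar - norm11 Vhat) := by
    rw [key3] at key; linarith
  -- Step 3: bound the cross term
  have hGbound : - ip G Δ ≤ (lam / 2) * norm11 Δ := by
    unfold ip norm11
    rw [Finset.mul_sum, ← Finset.sum_neg_distrib]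
    refine Finset.sum_le_sum fun i _ => ?_
    rw [Finset.mul_sum, ← Finset.sum_neg_distrib]
    refine Finset.sum_le_sum fun j _ => ?_
    calc -(G i j * Δ i j) ≤ |G i j * Δ i j| := neg_le_abs _
      _ = |G i j| * |Δ i j| := abs_mul _ _
      _ ≤ (lam / 2) * |Δ i j| :=
          mul_le_mul_of_nonneg_right (hgrad i j) (abs_nonneg _)
  -- Step 4: support decomposition
  set a : ℝ := norm11 (restrictF Δ S) with ha
  set b : ℝ := norm11 (restrictF Δ Sᶜ) with hb
  have hsplitΔ : norm11 Δ = a + b := norm11_split Δ S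
  have hVzero : ∀ q : Fin p × Fin K, q ∈ Sᶜ → Vstar q.1 q.2 = 0 := by
    intro q hq
    by_contra hne
    exact (Finset.mem_compl.mp hq) ((hS q).mpr hne)
  have hnsub : norm11 Vstar - norm11 Vhat ≤ a - b := by
    have h1 : norm11 (restrictF Vstar Sᶜ) = 0 := by
      rw [norm11_restrict_eq_sum]
      exact Finset.sum_eq_zero fun q hq => by simp [hVzero q hq]
    have h2 : norm11 (restrictF Vhat Sᶜ) = b := by
      rw [hb, norm11_restrict_eq_sum, norm11_restrict_eq_sum]
      refine Finset.sum_congr rfl fun q hq => ?_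
      have : Δ q.1 q.2 = Vhat q.1 q.2 - Vstar q.1 q.2 := by simp [hΔ]
      rw [this, hVzero q hq, sub_zero]
    have h3 : norm11 (restrictF Vstar S) - norm11 (restrictF Vhat S) ≤ a := by
      rw [ha, norm11_restrict_eq_sum, norm11_restrict_eq_sum, norm11_restrict_eq_sum,
        ← Finset.sum_sub_distrib]
      refine Finset.sum_le_sum fun q _ => ?_
      have hq : Δ q.1 q.2 = Vhat q.1 q.2 - Vstar q.1 q.2 := by simp [hΔ]
      rw [hq]
      calc |Vstar q.1 q.2| - |Vhat q.1 q.2|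
          ≤ |Vstar q.1 q.2 - Vhat q.1 q.2| := abs_sub_abs_le_abs_sub _ _
        _ = |Vhat q.1 q.2 - Vstar q.1 q.2| := abs_sub_comm _ _
    have e1 := norm11_split Vstar S
    have e2 := norm11_split Vhat S
    linarith
  have hTbound : T ≤ (3 * lam / 2) * a - (lam / 2) * b := by
    have hGb2 : - ip G Δ ≤ (lam / 2) * (a + b) := by rw [← hsplitΔ]; exact hGbound
    have hmul : lam * (norm11 Vstar - norm11 Vhat) ≤ lam * (a - b) :=
      mul_le_mul_of_nonneg_left hnsub hlam.le
    linarith [keyT, hGb2, hmul]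
  have hT0 : 0 ≤ T := ip_quad_nonneg hSh Δ
  have ha0 : 0 ≤ a := by rw [ha]; exact norm11_nonneg _
  have hb0 : 0 ≤ b := by rw [hb]; exact norm11_nonneg _
  have hcone : b ≤ 3 * a := by nlinarith [hT0, hTbound, hlam]
  -- Step 5: restricted eigenvalue
  set x : ℝ := norm12 Δ with hx
  have hx0 : 0 ≤ x := by
    rw [hx, norm12]
    exact Finset.sum_nonneg fun j _ => Real.sqrt_nonneg _
  have hre : κstar * x ^ 2 ≤ T := by
    have h := hRE Δ ⟨S, Finset.Subset.refl S, by omega, hcone⟩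
    rwa [trace_quad_eq] at h
  -- Step 6: a ≤ √s x
  have ha_le : a ≤ Real.sqrt s * x := by
    have hsq : a ^ 2 ≤ (s : ℝ) * x ^ 2 := by
      have hCS : a ^ 2 ≤ (S.card : ℝ) * ∑ q ∈ S, |Δ q.1 q.2| ^ 2 := by
        rw [ha, norm11_restrict_eq_sum]
        exact sq_sum_le_card_mul_sum_sq
      have h1 : ∑ q ∈ S, |Δ q.1 q.2| ^ 2 = ∑ q ∈ S, (Δ q.1 q.2) ^ 2 := by
        simp [sq_abs]
      have h2 : ∑ q ∈ S, (Δ q.1 q.2) ^ 2 ≤ ∑ j, ∑ i, (Δ i j) ^ 2 := by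
        calc ∑ q ∈ S, (Δ q.1 q.2) ^ 2
            ≤ ∑ q : Fin p × Fin K, (Δ q.1 q.2) ^ 2 :=
              Finset.sum_le_sum_of_subset_of_nonneg (Finset.subset_univ S)
                (fun _ _ _ => sq_nonneg _)
          _ = ∑ i, ∑ j, (Δ i j) ^ 2 := Fintype.sum_prod_type (f := fun q : Fin p × Fin K => (Δ q.1 q.2) ^ 2)
          _ = ∑ j, ∑ i, (Δ i j) ^ 2 := Finset.sum_comm
      have h3 : ∑ j, ∑ i, (Δ i j) ^ 2 ≤ x ^ 2 := by
        calc ∑ j, ∑ i, (Δ i j) ^ 2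
            = ∑ j, (Real.sqrt (∑ i, (Δ i j) ^ 2)) ^ 2 := by
              refine Finset.sum_congr rfl fun j _ => ?_
              rw [Real.sq_sqrt]; positivity
          _ ≤ (∑ j, Real.sqrt (∑ i, (Δ i j) ^ 2)) ^ 2 :=
              Finset.sum_sq_le_sq_sum_of_nonneg (fun j _ => Real.sqrt_nonneg _)
          _ = x ^ 2 := by rw [hx, norm12]
      have hcard : (S.card : ℝ) = (s : ℝ) := by exact_mod_cast congrArg Nat.cast hs.symm
      rw [hcard, h1] at hCS
      have hmul : (s : ℝ) * (∑ q ∈ S, (Δ q.1 q.2) ^ 2) ≤ (s : ℝ) * x ^ 2 :=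
        mul_le_mul_of_nonneg_left (le_trans h2 h3) (Nat.cast_nonneg s)
      linarith [hCS, hmul]
    have : a = Real.sqrt (a ^ 2) := (Real.sqrt_sq ha0).symm
    rw [this]
    calc Real.sqrt (a ^ 2) ≤ Real.sqrt ((s : ℝ) * x ^ 2) := Real.sqrt_le_sqrt hsq
      _ = Real.sqrt s * x := by
          rw [Real.sqrt_mul (Nat.cast_nonneg s), Real.sqrt_sq hx0]
  -- Step 7: conclude
  have hmain : κstar * x ^ 2 ≤ (3 * lam / 2) * (Real.sqrt s * x) := by
    have h4 : (3 * lam / 2) * a ≤ (3 * lam / 2) * (Real.sqrt s * x) :=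
      mul_le_mul_of_nonneg_left ha_le (by linarith)
    linarith [hre, hTbound, h4, mul_nonneg hlam.le hb0]
  rcases eq_or_lt_of_le hx0 with hxz | hxp
  · rw [← hxz]
    positivity
  · rw [le_div_iff₀ (by linarith : (0:ℝ) < 2 * κstar)]
    nlinarith [hmain, hxp]
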